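/- arXiv:1905.11389 — 2 statements merged into one kernel-verified Lean document; each statement's English description precedes it below -/
import Mathlib

section
/- Let f ∈ S_{p,μ} and α > 0. Then lim_{h→0} ‖Δ_h^α f‖_{p,μ} = 0. -/
set_option maxHeartbeats 1000000


open MeasureTheory Filter Topology Asymptotics

noncomputable section

/-- The `k`-th Fourier coefficient of a (2π-periodic) function `f : ℝ → ℂ`:
`f̂(k) = (2π)⁻¹ ∫_0^{2π} f(t) e^{-ikt} dt`. -/
def fcoeff (f : ℝ → ℂ) (k : ℤ) : ℂ :=
  (1 / (2 * (Real.pi : ℂ))) *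
    ∫ t in (0:ℝ)..(2 * Real.pi), f t * Complex.exp (-(Complex.I * (k : ℂ) * (t : ℂ)))

/-- The admissible set defining the Luxemburg norm:
`{a > 0 : Σ_k μ_k |f̂(k)/a|^{p_k} ≤ 1}` (with the sum required to converge). -/
def lpSet (p μ : ℤ → ℝ) (f : ℝ → ℂ) : Set ℝ :=
  {a : ℝ | 0 < a ∧
    Summable (fun k : ℤ => μ k * (‖fcoeff f k‖ / a) ^ (p k)) ∧
    ∑' k : ℤ, μ k * (‖fcoeff f k‖ / a) ^ (p k) ≤ 1}

/-- The Luxemburg norm `‖f‖_{p,μ}`. -/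
def luxNorm (p μ : ℤ → ℝ) (f : ℝ → ℂ) : ℝ := sInf (lpSet p μ f)

/-- Membership in the space `S_{p,μ}`: `f` is 2π-periodic, integrable on a period, and
has finite Luxemburg norm (i.e. the admissible set is nonempty). -/
def MemS (p μ : ℤ → ℝ) (f : ℝ → ℂ) : Prop :=
  Function.Periodic f (2 * Real.pi) ∧ IntervalIntegrable f volume 0 (2 * Real.pi) ∧
    (lpSet p μ f).Nonempty

/-- Generalized binomial coefficient `binom(α,j) = α(α−1)⋯(α−j+1)/j!`. -/
def gbinom (α : ℝ) (j : ℕ) : ℝ :=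
  (∏ i ∈ Finset.range j, (α - (i : ℝ))) / (j.factorial : ℝ)

/-- Fractional difference `Δ_h^α f(x) = Σ_{j=0}^∞ (−1)^j binom(α,j) f(x − jh)`. -/
def fracDiff (α h : ℝ) (f : ℝ → ℂ) (x : ℝ) : ℂ :=
  ∑' j : ℕ, (-1 : ℂ) ^ j * (gbinom α j : ℂ) * f (x - (j : ℝ) * h)

/-- Modulus of smoothness `ω_α(f,δ)_{p,μ} = sup_{|h| ≤ δ} ‖Δ_h^α f‖_{p,μ}`. -/
def modulus (p μ : ℤ → ℝ) (α : ℝ) (f : ℝ → ℂ) (δ : ℝ) : ℝ :=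
  ⨆ h : {h : ℝ // |h| ≤ δ}, luxNorm p μ (fracDiff α h.1 f)

/-- Trigonometric polynomial of degree at most `n - 1` with coefficients `c`:
`Σ_{|k| ≤ n-1} c_k e^{ikx}`. -/
def trigSum (c : ℤ → ℂ) (n : ℕ) (x : ℝ) : ℂ :=
  ∑ k ∈ Finset.Ioo (-(n : ℤ)) (n : ℤ), c k * Complex.exp (Complex.I * (k : ℂ) * (x : ℂ))

/-- Best approximation `E_n(f)_{p,μ}` of `f` by trigonometric polynomials of degree `≤ n-1`. -/
def bestApprox (p μ : ℤ → ℝ) (n : ℕ) (f : ℝ → ℂ) : ℝ :=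
  sInf {r : ℝ | ∃ c : ℤ → ℂ, r = luxNorm p μ (fun x => f x - trigSum c n x)}

/-- `g` is the ψ-derivative of `f`: `ĝ(k) = f̂(k)/ψ_k` for `k ≠ 0` (and `ĝ(0) = 0`),
with `g` 2π-periodic and integrable on a period. -/
def IsPsiDeriv (ψ : ℤ → ℂ) (f g : ℝ → ℂ) : Prop :=
  Function.Periodic g (2 * Real.pi) ∧ IntervalIntegrable g volume 0 (2 * Real.pi) ∧
    fcoeff g 0 = 0 ∧ ∀ k : ℤ, k ≠ 0 → fcoeff g k = fcoeff f k / ψ k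

/-- Trigonometric polynomial of degree at most `n`: `τ_n(x) = Σ_{|k| ≤ n} c_k e^{ikx}`. -/
def trigPoly (c : ℤ → ℂ) (n : ℕ) (x : ℝ) : ℂ :=
  ∑ k ∈ Finset.Icc (-(n : ℤ)) (n : ℤ), c k * Complex.exp (Complex.I * (k : ℂ) * (x : ℂ))

/-- ψ-derivative of the trigonometric polynomial with coefficients `c`:
`τ_n^ψ(x) = Σ_{0<|k|≤n} (c_k/ψ_k) e^{ikx}`. -/
def trigPolyPsi (ψ : ℤ → ℂ) (c : ℤ → ℂ) (n : ℕ) (x : ℝ) : ℂ :=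
  ∑ k ∈ Finset.Icc (-(n : ℤ)) (n : ℤ),
    (if k = 0 then 0 else c k / ψ k) * Complex.exp (Complex.I * (k : ℂ) * (x : ℂ))

lemma gbinom_succ (α : ℝ) (j : ℕ) :
    gbinom α (j + 1) = gbinom α j * (α - j) / (j + 1) := by
  unfold gbinom
  rw [Finset.prod_range_succ, Nat.factorial_succ]
  push_cast
  rw [div_mul_eq_mul_div, div_div, mul_comm ((j:ℝ)+1)]

lemma gbinom_shift (α : ℝ) (n : ℕ) :
    gbinom α (n + 1) = α / (n + 1) * gbinom (α - 1) n := by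
  unfold gbinom
  rw [Nat.factorial_succ, Finset.prod_range_succ']
  push_cast
  have : ∏ i ∈ Finset.range n, (α - (↑i + 1)) = ∏ i ∈ Finset.range n, (α - 1 - ↑i) := by
    apply Finset.prod_congr rfl; intro i _; ring
  rw [this]
  have h1 : ((n:ℝ) + 1) ≠ 0 := by positivity
  field_simp
  ring

lemma gbinom_pascal (α : ℝ) (n : ℕ) :
    gbinom (α - 1) (n + 1) = gbinom α (n + 1) - gbinom (α - 1) n := by
  rw [gbinom_shift α n]
  have h := gbinom_succ (α - 1) n
  rw [h]
  have h1 : ((n:ℝ) + 1) ≠ 0 := by positivity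
  field_simp
  ring

lemma gbinom_psum (α : ℝ) (n : ℕ) :
    ∑ j ∈ Finset.range (n + 1), (-1 : ℝ) ^ j * gbinom α j = (-1) ^ n * gbinom (α - 1) n := by
  induction n with
  | zero => simp [gbinom]
  | succ n ih =>
    rw [Finset.sum_range_succ, ih, gbinom_pascal]
    ring

lemma gbinom_abs_succ (α : ℝ) (j : ℕ) (hj : α ≤ j) :
    ((j:ℝ)+1) * |gbinom α (j+1)| = ((j:ℝ) - α) * |gbinom α j| := by
  rw [gbinom_succ, abs_div, abs_mul,
    abs_of_nonneg (show (0:ℝ) ≤ (j:ℝ)+1 by positivity),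
    abs_of_nonpos (by linarith : α - (j:ℝ) ≤ 0)]
  have h1 : ((j:ℝ)+1) ≠ 0 := by positivity
  field_simp
  ring

lemma gbinom_telescope (α : ℝ) (m : ℕ) (hm : α ≤ m) :
    ∀ n, m ≤ n →
      α * ∑ j ∈ Finset.Ico m n, |gbinom α j| + n * |gbinom α n| = m * |gbinom α m| := by
  intro n hn
  induction n, hn using Nat.le_induction with
  | base => simp
  | succ n hn ih =>
    rw [Finset.sum_Ico_succ_top hn]
    push_cast
    have key := gbinom_abs_succ α n (le_trans hm (by exact_mod_cast Nat.cast_le.2 hn))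
    nlinarith [key, ih]

lemma gbinom_abs_summable (α : ℝ) (hα : 0 < α) : Summable (fun j => |gbinom α j|) := by
  set m := ⌈α⌉₊ with hmdef
  have hm : α ≤ m := Nat.le_ceil α
  apply summable_of_sum_range_le
    (c := (∑ j ∈ Finset.range m, |gbinom α j|) + m * |gbinom α m| / α)
    (fun n => abs_nonneg _)
  intro n
  rcases le_or_gt n m with h | h
  · calc ∑ j ∈ Finset.range n, |gbinom α j| ≤ ∑ j ∈ Finset.range m, |gbinom α j| :=
        Finset.sum_le_sum_of_subset_of_nonneg (Finset.range_subset_range.2 h)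
          (fun _ _ _ => abs_nonneg _)
      _ ≤ _ := le_add_of_nonneg_right (by positivity)
  · have key := gbinom_telescope α m hm n h.le
    have hsplit : ∑ j ∈ Finset.range n, |gbinom α j|
        = ∑ j ∈ Finset.range m, |gbinom α j| + ∑ j ∈ Finset.Ico m n, |gbinom α j| := by
      rw [Finset.range_eq_Ico, Finset.range_eq_Ico]
      exact (Finset.sum_Ico_consecutive (fun j => |gbinom α j|) (Nat.zero_le m) h.le).symm
    rw [hsplit]
    have hnb : (0:ℝ) ≤ (n:ℝ) * |gbinom α n| := by positivity
    have : ∑ j ∈ Finset.Ico m n, |gbinom α j| ≤ m * |gbinom α m| / α := by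
      rw [le_div_iff₀ hα]
      nlinarith [key]
    linarith

lemma gbinom_mul_tendsto (α : ℝ) (hα : 0 < α) :
    Tendsto (fun n : ℕ => (n:ℝ) * |gbinom α n|) atTop (𝓝 0) := by
  set m := ⌈α⌉₊ with hmdef
  have hm : α ≤ m := Nat.le_ceil α
  have hsum := gbinom_abs_summable α hα
  set L : ℝ := m * |gbinom α m| -
    α * ((∑' j, |gbinom α j|) - ∑ j ∈ Finset.range m, |gbinom α j|) with hL
  have hps : Tendsto (fun n => ∑ j ∈ Finset.range n, |gbinom α j|) atTop
      (𝓝 (∑' j, |gbinom α j|)) := hsum.hasSum.tendsto_sum_nat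
  have htend : Tendsto (fun n : ℕ => (n:ℝ) * |gbinom α n|) atTop (𝓝 L) := by
    have heq : ∀ᶠ n in atTop, (m:ℝ) * |gbinom α m| -
        α * ((∑ j ∈ Finset.range n, |gbinom α j|) - ∑ j ∈ Finset.range m, |gbinom α j|)
        = (n:ℝ) * |gbinom α n| := by
      filter_upwards [eventually_ge_atTop m] with n hn
      have key := gbinom_telescope α m hm n hn
      have hsplit : ∑ j ∈ Finset.range n, |gbinom α j|
          = ∑ j ∈ Finset.range m, |gbinom α j| + ∑ j ∈ Finset.Ico m n, |gbinom α j| := by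
        rw [Finset.range_eq_Ico, Finset.range_eq_Ico]
        exact (Finset.sum_Ico_consecutive (fun j => |gbinom α j|) (Nat.zero_le m) hn).symm
      rw [hsplit]; linarith
    apply Tendsto.congr' heq
    exact (tendsto_const_nhds.sub (((hps.sub tendsto_const_nhds)).const_mul α))
  -- Show L = 0
  have hL0 : L = 0 := by
    by_contra hne
    have hLnn : 0 ≤ L := le_of_tendsto_of_tendsto' tendsto_const_nhds htend
      (fun n => by positivity)
    have hLpos : 0 < L := lt_of_le_of_ne hLnn (Ne.symm hne)
    obtain ⟨N, hN⟩ := (htend.eventually (eventually_ge_nhds (show L/2 < L by linarith))).exists_forall_of_atTop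
    -- b n ≥ L/2/n for n ≥ max N 1
    have hsum' : Summable (fun n : ℕ => |gbinom α (n + (N+1))|) :=
      (summable_nat_add_iff (N+1)).2 hsum
    have hcomp : Summable (fun n : ℕ => L / 2 / ((n:ℝ) + (N+1))) := by
      apply Summable.of_nonneg_of_le (fun n => by positivity) _ hsum'
      intro n
      have h1 := hN (n + (N+1)) (by omega)
      have h2 : (0:ℝ) < (n:ℝ) + (N+1) := by positivity
      rw [div_le_iff₀ h2]
      calc L/2 ≤ ((n + (N+1) : ℕ) : ℝ) * |gbinom α (n + (N+1))| := h1
        _ = |gbinom α (n + (N+1))| * ((n:ℝ) + (N+1)) := by push_cast; ring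
    have : Summable (fun n : ℕ => ((n:ℝ) + (N+1))⁻¹) := by
      have := hcomp.mul_left (2 / L)
      convert this using 2 with n
      · rfl
      have hL' : L ≠ 0 := hne
      field_simp
    exact Real.not_summable_natCast_inv ((summable_nat_add_iff (N+1)).1
      (by simpa using this))
  rwa [hL0] at htend

lemma gbinom_shift_tendsto (α : ℝ) (hα : 0 < α) :
    Tendsto (fun n : ℕ => gbinom (α - 1) n) atTop (𝓝 0) := by
  have hb : Tendsto (fun n : ℕ => (((n:ℝ)+1) * |gbinom α (n+1)|) / α) atTop (𝓝 0) := by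
    have := ((gbinom_mul_tendsto α hα).comp (tendsto_add_atTop_nat 1)).div_const α
    simp only [Function.comp] at this
    convert this using 2 with n
    · push_cast; ring
    · simp
  apply squeeze_zero_norm _ hb
  intro n
  have h1 : gbinom (α-1) n = ((n:ℝ)+1) / α * gbinom α (n+1) := by
    rw [gbinom_shift]
    field_simp
  rw [Real.norm_eq_abs, h1, abs_mul, abs_div,
    abs_of_nonneg (show (0:ℝ) ≤ (n:ℝ)+1 by positivity), abs_of_pos hα, div_mul_eq_mul_div]

lemma gbinom_alt_summable (α : ℝ) (hα : 0 < α) :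
    Summable (fun j : ℕ => (-1:ℝ)^j * gbinom α j) := by
  apply Summable.of_abs
  apply (gbinom_abs_summable α hα).congr
  intro j
  rw [abs_mul, abs_pow, abs_neg, abs_one, one_pow, one_mul]

lemma gbinom_alt_tsum (α : ℝ) (hα : 0 < α) :
    ∑' j : ℕ, (-1:ℝ)^j * gbinom α j = 0 := by
  have hs := gbinom_alt_summable α hα
  have h1 : Tendsto (fun n => ∑ j ∈ Finset.range (n+1), (-1:ℝ)^j * gbinom α j) atTop
      (𝓝 (∑' j : ℕ, (-1:ℝ)^j * gbinom α j)) :=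
    hs.hasSum.tendsto_sum_nat.comp (tendsto_add_atTop_nat 1)
  have h2 : Tendsto (fun n => ∑ j ∈ Finset.range (n+1), (-1:ℝ)^j * gbinom α j) atTop (𝓝 0) := by
    simp_rw [gbinom_psum]
    apply squeeze_zero_norm _ (by simpa using (gbinom_shift_tendsto α hα).abs)
    intro n
    rw [Real.norm_eq_abs, abs_mul, abs_pow, abs_neg, abs_one, one_pow, one_mul]
  exact tendsto_nhds_unique h1 h2

def fmult (α : ℝ) (k : ℤ) (h : ℝ) : ℂ :=
  ∑' j : ℕ, (-1:ℂ)^j * (gbinom α j : ℂ) *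
    Complex.exp (-(Complex.I * (k:ℂ) * (((j:ℝ) * h : ℝ) : ℂ)))

lemma norm_exp_I_mul (k : ℤ) (x : ℝ) :
    ‖Complex.exp (-(Complex.I * (k:ℂ) * (x:ℂ)))‖ = 1 := by
  rw [Complex.norm_exp]
  simp [Complex.mul_re]

lemma fmult_term_norm (α : ℝ) (j : ℕ) (k : ℤ) (x : ℝ) :
    ‖(-1:ℂ)^j * (gbinom α j : ℂ) * Complex.exp (-(Complex.I * (k:ℂ) * (x:ℂ)))‖
      = |gbinom α j| := by
  rw [norm_mul, norm_mul, norm_pow, norm_neg, norm_one, one_pow, one_mul,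
    norm_exp_I_mul, mul_one, Complex.norm_real, Real.norm_eq_abs]

lemma fmult_norm_le (α : ℝ) (hα : 0 < α) (k : ℤ) (h : ℝ) :
    ‖fmult α k h‖ ≤ ∑' j : ℕ, |gbinom α j| := by
  have hs : Summable (fun j : ℕ => ‖(-1:ℂ)^j * (gbinom α j : ℂ) *
      Complex.exp (-(Complex.I * (k:ℂ) * (((j:ℝ) * h : ℝ) : ℂ)))‖) := by
    apply (gbinom_abs_summable α hα).congr
    intro j; rw [fmult_term_norm]
  calc ‖fmult α k h‖ ≤ ∑' j : ℕ, ‖(-1:ℂ)^j * (gbinom α j : ℂ) *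
      Complex.exp (-(Complex.I * (k:ℂ) * (((j:ℝ) * h : ℝ) : ℂ)))‖ :=
      norm_tsum_le_tsum_norm hs
    _ = ∑' j : ℕ, |gbinom α j| := tsum_congr fun j => fmult_term_norm α j k _

lemma fmult_continuous (α : ℝ) (hα : 0 < α) (k : ℤ) :
    Continuous (fmult α k) := by
  apply continuous_tsum (u := fun j => |gbinom α j|)
  · intro j
    fun_prop
  · exact gbinom_abs_summable α hα
  · intro j x
    exact le_of_eq (fmult_term_norm α j k _)

lemma fmult_zero (α : ℝ) (hα : 0 < α) (k : ℤ) : fmult α k 0 = 0 := by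
  unfold fmult
  simp only [mul_zero, Complex.ofReal_zero, neg_zero, Complex.exp_zero, mul_one]
  have h1 : ∀ j : ℕ, (-1:ℂ)^j * (gbinom α j : ℂ) = (((-1:ℝ)^j * gbinom α j : ℝ) : ℂ) := by
    intro j; push_cast; ring
  rw [tsum_congr h1, ← Complex.ofReal_tsum, gbinom_alt_tsum α hα, Complex.ofReal_zero]

lemma fmult_tendsto (α : ℝ) (hα : 0 < α) (k : ℤ) :
    Tendsto (fun h => fmult α k h) (𝓝 0) (𝓝 0) := by
  have := (fmult_continuous α hα k).tendsto 0
  rwa [fmult_zero α hα k] at this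

open MeasureTheory intervalIntegral

lemma periodic_intervalIntegrable {f : ℝ → ℂ} {T : ℝ} (hf : Function.Periodic f T)
    (hT : 0 < T) (h0 : IntervalIntegrable f volume 0 T) (a b : ℝ) :
    IntervalIntegrable f volume a b := by
  have block : ∀ n : ℤ, IntervalIntegrable f volume (n*T) ((n:ℝ)*T + T) := by
    intro n
    have h1 := h0.comp_sub_right (n*T)
    have h2 : (fun x => f (x - n*T)) = f := funext fun x => hf.sub_int_mul_eq n
    rw [h2] at h1
    have e1 : (0:ℝ) + n*T = n*T := by ring
    have e2 : T + n*T = (n:ℝ)*T + T := by ring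
    rwa [e1, e2] at h1
  have chain : ∀ (n : ℤ) (m : ℕ), IntervalIntegrable f volume ((n:ℝ)*T) (((n:ℝ) + m)*T) := by
    intro n m
    induction m with
    | zero => simpa using (block n).mono_set (by simp)
    | succ m ih =>
      apply ih.trans
      have h3 := block (n + m)
      rw [show (((n + (m:ℤ)) : ℤ) : ℝ) * T = ((n:ℝ) + m) * T by push_cast; ring] at h3
      have e : ((n:ℝ) + m)*T + T = ((n:ℝ) + ((m+1 : ℕ) : ℝ))*T := by push_cast; ring
      rwa [e] at h3
  set c := min a b
  set d := max a b
  set n : ℤ := ⌊c / T⌋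
  have hn : (n:ℝ) * T ≤ c := by
    rw [← le_div_iff₀ hT]
    exact Int.floor_le _
  obtain ⟨m, hm⟩ := exists_nat_ge ((d - (n:ℝ)*T) / T)
  have hd : d ≤ ((n:ℝ) + m) * T := by
    have := (div_le_iff₀ hT).1 hm
    linarith [this]
  have hle : (n:ℝ)*T ≤ ((n:ℝ) + m)*T := by nlinarith [hT, (Nat.cast_nonneg m : (0:ℝ) ≤ m)]
  apply (chain n m).mono_set
  rw [Set.uIcc_subset_uIcc_iff_le]
  constructor
  · rw [min_eq_left hle]
    exact hn
  · rw [max_eq_right hle]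
    exact hd

lemma exp_periodic (k : ℤ) :
    Function.Periodic (fun u : ℝ => Complex.exp (-(Complex.I * (k:ℂ) * (u:ℂ)))) (2*Real.pi) := by
  intro u
  simp only
  push_cast
  rw [show -(Complex.I * (k:ℂ) * ((u:ℂ) + 2*Real.pi))
      = -(Complex.I * (k:ℂ) * (u:ℂ)) + (((-k : ℤ)) : ℂ) * (2 * Real.pi * Complex.I) by push_cast; ring,
    Complex.exp_add, Complex.exp_int_mul_two_pi_mul_I, mul_one]

lemma integrand_periodic {f : ℝ → ℂ} (hf : Function.Periodic f (2*Real.pi)) (k : ℤ) :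
    Function.Periodic (fun u : ℝ => f u * Complex.exp (-(Complex.I * (k:ℂ) * (u:ℂ))))
      (2*Real.pi) := by
  intro u
  simp only [hf u, exp_periodic k u]

lemma translate_integral {f : ℝ → ℂ} (hf : Function.Periodic f (2*Real.pi))
    (hint : ∀ a b, IntervalIntegrable f volume a b) (k : ℤ) (s : ℝ) :
    ∫ t in (0:ℝ)..(2*Real.pi), f (t - s) * Complex.exp (-(Complex.I * (k:ℂ) * (t:ℂ)))
      = Complex.exp (-(Complex.I * (k:ℂ) * (s:ℂ))) *
        ∫ t in (0:ℝ)..(2*Real.pi), f t * Complex.exp (-(Complex.I * (k:ℂ) * (t:ℂ))) := by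
  set G : ℝ → ℂ := fun u : ℝ => Complex.exp (-(Complex.I * (k:ℂ) * (s:ℂ))) *
      (f u * Complex.exp (-(Complex.I * (k:ℂ) * (u:ℂ)))) with hG
  have h1 : ∀ t : ℝ, f (t - s) * Complex.exp (-(Complex.I * (k:ℂ) * (t:ℂ))) = G (t - s) := by
    intro t
    have e : Complex.exp (-(Complex.I * (k:ℂ) * (s:ℂ))) *
        Complex.exp (-(Complex.I * (k:ℂ) * (((t - s : ℝ)):ℂ)))
        = Complex.exp (-(Complex.I * (k:ℂ) * ((t:ℝ):ℂ))) := by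
      rw [← Complex.exp_add]
      congr 1
      push_cast
      ring
    simp only [hG]
    rw [← e]
    ring
  have hGper : Function.Periodic G (2*Real.pi) := by
    intro u
    simp only [hG]
    exact congrArg _ (integrand_periodic hf k u)
  calc ∫ t in (0:ℝ)..(2*Real.pi), f (t - s) * Complex.exp (-(Complex.I * (k:ℂ) * (t:ℂ)))
      = ∫ t in (0:ℝ)..(2*Real.pi), G (t - s) :=
        intervalIntegral.integral_congr (fun t _ => h1 t)
    _ = ∫ u in (0:ℝ) - s..(2*Real.pi) - s, G u := intervalIntegral.integral_comp_sub_right G s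
    _ = ∫ u in (0:ℝ) - s..((0:ℝ) - s) + 2*Real.pi, G u := by
        congr 1
        ring
    _ = ∫ u in (0:ℝ)..(0:ℝ) + 2*Real.pi, G u := hGper.intervalIntegral_add_eq (0 - s) 0
    _ = ∫ u in (0:ℝ)..2*Real.pi, G u := by rw [zero_add]
    _ = Complex.exp (-(Complex.I * (k:ℂ) * (s:ℂ))) *
        ∫ t in (0:ℝ)..(2*Real.pi), f t * Complex.exp (-(Complex.I * (k:ℂ) * (t:ℂ))) :=
        intervalIntegral.integral_const_mul _ _

lemma fcoeff_fracDiff (α : ℝ) (hα : 0 < α) {f : ℝ → ℂ}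
    (hper : Function.Periodic f (2*Real.pi)) (h0 : IntervalIntegrable f volume 0 (2*Real.pi))
    (h' : ℝ) (k : ℤ) :
    fcoeff (fracDiff α h' f) k = fmult α k h' * fcoeff f k := by
  have hπ : (0:ℝ) < 2*Real.pi := by positivity
  have hint := periodic_intervalIntegrable hper hπ h0
  set F : ℕ → ℝ → ℂ := fun j t => (-1:ℂ)^j * (gbinom α j : ℂ) *
    (f (t - (j:ℝ)*h') * Complex.exp (-(Complex.I * (k:ℂ) * (t:ℂ)))) with hF
  have hshift : ∀ j : ℕ, IntervalIntegrable (fun t => f (t - (j:ℝ)*h')) volume 0 (2*Real.pi) := by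
    intro j
    have h1 := (hint ((0:ℝ) - (j:ℝ)*h') (2*Real.pi - (j:ℝ)*h')).comp_sub_right ((j:ℝ)*h')
    have e1 : (0:ℝ) - (j:ℝ)*h' + (j:ℝ)*h' = 0 := by ring
    have e2 : 2*Real.pi - (j:ℝ)*h' + (j:ℝ)*h' = 2*Real.pi := by ring
    rwa [e1, e2] at h1
  have hFint : ∀ j, IntervalIntegrable (F j) volume 0 (2*Real.pi) := by
    intro j
    apply IntervalIntegrable.const_mul
    exact (hshift j).mul_continuousOn
      (Complex.continuous_exp.comp (by fun_prop)).continuousOn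
  have hnorm : ∀ j, (∫ t in (0:ℝ)..(2*Real.pi), ‖F j t‖)
      = |gbinom α j| * ∫ t in (0:ℝ)..(2*Real.pi), ‖f t‖ := by
    intro j
    have h1 : ∀ t : ℝ, ‖F j t‖ = |gbinom α j| * ‖f (t - (j:ℝ)*h')‖ := by
      intro t
      rw [hF]
      simp only
      rw [norm_mul, norm_mul, norm_mul, norm_pow, norm_neg, norm_one, one_pow, one_mul,
        Complex.norm_real, Real.norm_eq_abs, norm_exp_I_mul, mul_one]
    rw [intervalIntegral.integral_congr (fun t _ => h1 t),
      intervalIntegral.integral_const_mul]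
    congr 1
    rw [intervalIntegral.integral_comp_sub_right (fun u => ‖f u‖) ((j:ℝ)*h')]
    have hnper : Function.Periodic (fun u : ℝ => ‖f u‖) (2*Real.pi) := fun u => by
      simp only
      rw [hper u]
    calc ∫ u in (0:ℝ) - (j:ℝ)*h'..2*Real.pi - (j:ℝ)*h', ‖f u‖
        = ∫ u in (0:ℝ) - (j:ℝ)*h'..((0:ℝ) - (j:ℝ)*h') + 2*Real.pi, ‖f u‖ := by congr 1; ring
      _ = ∫ u in (0:ℝ)..(0:ℝ)+2*Real.pi, ‖f u‖ := hnper.intervalIntegral_add_eq _ 0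
      _ = ∫ u in (0:ℝ)..2*Real.pi, ‖f u‖ := by rw [zero_add]
  have hsumnorm : Summable (fun j => ∫ t in Set.Ioc (0:ℝ) (2*Real.pi), ‖F j t‖) := by
    apply ((gbinom_abs_summable α hα).mul_right
      (∫ t in (0:ℝ)..(2*Real.pi), ‖f t‖)).congr
    intro j
    rw [← hnorm j, intervalIntegral.integral_of_le hπ.le]
  have key : (∫ t in (0:ℝ)..(2*Real.pi),
        fracDiff α h' f t * Complex.exp (-(Complex.I * (k:ℂ) * (t:ℂ))))
      = fmult α k h' * ∫ t in (0:ℝ)..(2*Real.pi),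
          f t * Complex.exp (-(Complex.I * (k:ℂ) * (t:ℂ))) := by
    have step1 : ∀ t : ℝ, fracDiff α h' f t * Complex.exp (-(Complex.I * (k:ℂ) * (t:ℂ)))
        = ∑' j : ℕ, F j t := by
      intro t
      simp only [fracDiff, hF]
      rw [← tsum_mul_right]
      exact tsum_congr fun j => mul_assoc _ _ _
    calc (∫ t in (0:ℝ)..(2*Real.pi),
          fracDiff α h' f t * Complex.exp (-(Complex.I * (k:ℂ) * (t:ℂ))))
        = ∫ t in (0:ℝ)..(2*Real.pi), ∑' j : ℕ, F j t :=
          intervalIntegral.integral_congr (fun t _ => step1 t)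
      _ = ∫ t in Set.Ioc (0:ℝ) (2*Real.pi), ∑' j : ℕ, F j t :=
          intervalIntegral.integral_of_le hπ.le
      _ = ∑' j : ℕ, ∫ t in Set.Ioc (0:ℝ) (2*Real.pi), F j t :=
          (MeasureTheory.integral_tsum_of_summable_integral_norm
            (fun j => (intervalIntegrable_iff_integrableOn_Ioc_of_le hπ.le).1 (hFint j))
            hsumnorm).symm
      _ = ∑' j : ℕ, ∫ t in (0:ℝ)..(2*Real.pi), F j t :=
          tsum_congr fun j => (intervalIntegral.integral_of_le hπ.le).symm
      _ = ∑' j : ℕ, ((-1:ℂ)^j * (gbinom α j : ℂ) *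
            Complex.exp (-(Complex.I * (k:ℂ) * ((((j:ℝ) * h' : ℝ)):ℂ)))) *
            ∫ t in (0:ℝ)..(2*Real.pi),
              f t * Complex.exp (-(Complex.I * (k:ℂ) * (t:ℂ))) := by
          apply tsum_congr
          intro j
          rw [hF]
          simp only
          rw [intervalIntegral.integral_const_mul,
            translate_integral hper hint k ((j:ℝ)*h')]
          ring
      _ = fmult α k h' * ∫ t in (0:ℝ)..(2*Real.pi),
            f t * Complex.exp (-(Complex.I * (k:ℂ) * (t:ℂ))) := by
          rw [tsum_mul_right]
          rfl
  simp only [fcoeff]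
  rw [key]
  ring


/-- `lim_{h→0} ‖Δ_h^α f‖_{p,μ} = 0`. -/
theorem stmt_3 (K : ℝ) (p μ : ℤ → ℝ) (hp : ∀ k : ℤ, 1 ≤ p k ∧ p k ≤ K)
    (hμ : ∀ k : ℤ, 0 ≤ μ k) (f : ℝ → ℂ) (hf : MemS p μ f)
    (α : ℝ) (hα : 0 < α) :
    Tendsto (fun h : ℝ => luxNorm p μ (fracDiff α h f)) (𝓝 0) (𝓝 0) := by
  obtain ⟨hper, h0, a₀, ha₀pos, hS, hSle⟩ := hf
  set M : ℝ := ∑' j : ℕ, |gbinom α j| with hM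
  have hM0 : 0 ≤ M := tsum_nonneg fun j => abs_nonneg _
  rw [NormedAddCommGroup.tendsto_nhds_zero]
  intro ε hε
  set ε' : ℝ := ε/2 with hε'
  have hε'pos : 0 < ε' := by positivity
  set C : ℝ := max 1 (M * a₀ / ε') with hC
  have hC1 : (1:ℝ) ≤ C := le_max_left _ _
  have hCpos : (0:ℝ) < C := lt_of_lt_of_le one_pos hC1
  set D : ℝ := C ^ K with hD
  have hD0 : 0 ≤ D := Real.rpow_nonneg hCpos.le K
  set S : ℤ → ℝ := fun k => μ k * (‖fcoeff f k‖ / a₀) ^ (p k) with hSdef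
  -- global bound
  have hbound : ∀ (h : ℝ) (k : ℤ),
      μ k * (‖fcoeff (fracDiff α h f) k‖ / ε') ^ (p k) ≤ D * S k := by
    intro h k
    have hpk1 := (hp k).1
    have hpkK := (hp k).2
    have hpk0 : (0:ℝ) ≤ p k := le_trans zero_le_one hpk1
    have hcoef : ‖fcoeff (fracDiff α h f) k‖ ≤ M * ‖fcoeff f k‖ := by
      rw [fcoeff_fracDiff α hα hper h0 h k, norm_mul]
      apply mul_le_mul_of_nonneg_right _ (norm_nonneg _)
      exact fmult_norm_le α hα k h
    have h1 : ‖fcoeff (fracDiff α h f) k‖ / ε'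
        ≤ C * (‖fcoeff f k‖ / a₀) := by
      calc ‖fcoeff (fracDiff α h f) k‖ / ε'
          ≤ (M * ‖fcoeff f k‖) / ε' := by gcongr
        _ = (M * a₀ / ε') * (‖fcoeff f k‖ / a₀) := by
            field_simp
        _ ≤ C * (‖fcoeff f k‖ / a₀) := by
            apply mul_le_mul_of_nonneg_right (le_max_right _ _) (by positivity)
    calc μ k * (‖fcoeff (fracDiff α h f) k‖ / ε') ^ (p k)
        ≤ μ k * ((C * (‖fcoeff f k‖ / a₀)) ^ (p k)) := by
          apply mul_le_mul_of_nonneg_left _ (hμ k)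
          exact Real.rpow_le_rpow (by positivity) h1 hpk0
      _ = μ k * (C ^ (p k) * (‖fcoeff f k‖ / a₀) ^ (p k)) := by
          rw [Real.mul_rpow hCpos.le (by positivity)]
      _ ≤ μ k * (C ^ K * (‖fcoeff f k‖ / a₀) ^ (p k)) := by
          apply mul_le_mul_of_nonneg_left _ (hμ k)
          apply mul_le_mul_of_nonneg_right
            (Real.rpow_le_rpow_of_exponent_le hC1 hpkK)
            (Real.rpow_nonneg (by positivity) _)
      _ = D * S k := by rw [hD, hSdef]; ring
  have hDS : Summable (fun k => D * S k) := hS.mul_left D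
  -- tail
  obtain ⟨T, hT⟩ : ∃ T : Finset ℤ, ∑' k : ↑((T : Set ℤ)ᶜ), D * S k.1 ≤ 1/2 :=
    ((tendsto_tsum_compl_atTop_zero (fun k : ℤ => D * S k)).eventually
      (eventually_le_nhds (show (0:ℝ) < 1/2 by norm_num))).exists
  -- head terms tend to 0
  have hhead : ∀ k : ℤ, Tendsto (fun h : ℝ =>
      μ k * (‖fcoeff (fracDiff α h f) k‖ / ε') ^ (p k)) (𝓝 0) (𝓝 0) := by
    intro k
    have hpk1 := (hp k).1
    have h1 : Tendsto (fun h : ℝ => ‖fcoeff (fracDiff α h f) k‖) (𝓝 0) (𝓝 0) := by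
      have h2 : Tendsto (fun h : ℝ => ‖fmult α k h‖ * ‖fcoeff f k‖) (𝓝 0) (𝓝 0) := by
        simpa using ((fmult_tendsto α hα k).norm.mul_const (‖fcoeff f k‖))
      apply h2.congr
      intro h
      rw [fcoeff_fracDiff α hα hper h0 h k, norm_mul]
    have h2 : Tendsto (fun x : ℝ => μ k * (x / ε') ^ (p k)) (𝓝 0) (𝓝 0) := by
      have hc : Tendsto (fun x : ℝ => x ^ (p k)) (𝓝 0) (𝓝 0) := by
        have := (Real.continuousAt_rpow_const 0 (p k) (Or.inr (by linarith))).tendsto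
        rwa [Real.zero_rpow (by linarith)] at this
      have hdiv : Tendsto (fun x : ℝ => x / ε') (𝓝 0) (𝓝 0) := by
        simpa using (tendsto_id (x := 𝓝 (0:ℝ))).div_const ε'
      simpa using ((hc.comp hdiv).const_mul (μ k))
    exact h2.comp h1
  have hev : ∀ᶠ h in 𝓝 (0:ℝ), ∀ k ∈ T,
      μ k * (‖fcoeff (fracDiff α h f) k‖ / ε') ^ (p k)
        ≤ 1/(2*((T.card : ℝ) + 1)) := by
    rw [eventually_all_finset]
    intro k _
    exact (hhead k).eventually (eventually_le_nhds (by positivity))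
  filter_upwards [hev] with h hh
  have hsump : Summable (fun k : ℤ =>
      μ k * (‖fcoeff (fracDiff α h f) k‖ / ε') ^ (p k)) := by
    apply Summable.of_nonneg_of_le _ (hbound h) hDS
    intro k
    exact mul_nonneg (hμ k) (Real.rpow_nonneg (by positivity) _)
  have hmem : ε' ∈ lpSet p μ (fracDiff α h f) := by
    refine ⟨hε'pos, hsump, ?_⟩
    rw [← Summable.sum_add_tsum_compl (s := T) hsump]
    have head_le : ∑ k ∈ T,
        μ k * (‖fcoeff (fracDiff α h f) k‖ / ε') ^ (p k) ≤ 1/2 := by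
      calc ∑ k ∈ T, μ k * (‖fcoeff (fracDiff α h f) k‖ / ε') ^ (p k)
          ≤ ∑ _k ∈ T, 1/(2*((T.card : ℝ) + 1)) := Finset.sum_le_sum (fun k hk => hh k hk)
        _ = (T.card : ℝ) * (1/(2*((T.card : ℝ) + 1))) := by
            rw [Finset.sum_const, nsmul_eq_mul]
        _ ≤ 1/2 := by
            rw [mul_one_div, div_le_div_iff₀ (by positivity) (by norm_num)]
            push_cast
            nlinarith [(Nat.cast_nonneg T.card : (0:ℝ) ≤ T.card)]
    have tail_le : (∑' k : ↑((T : Set ℤ)ᶜ),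
          μ k.1 * (‖fcoeff (fracDiff α h f) k.1‖ / ε') ^ (p k.1))
        ≤ ∑' k : ↑((T : Set ℤ)ᶜ), D * S k.1 := by
      have hs1 : Summable (fun k : ↑((T : Set ℤ)ᶜ) =>
          μ k.1 * (‖fcoeff (fracDiff α h f) k.1‖ / ε') ^ (p k.1)) :=
        (hsump.subtype _).congr (fun _ => rfl)
      have hs2 : Summable (fun k : ↑((T : Set ℤ)ᶜ) => D * S k.1) :=
        (hDS.subtype _).congr (fun _ => rfl)
      exact Summable.tsum_le_tsum (fun k => hbound h k.1) hs1 hs2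
    linarith [hT, head_le, tail_le]
  have hlux_le : luxNorm p μ (fracDiff α h f) ≤ ε' :=
    csInf_le ⟨0, fun x hx => hx.1.le⟩ hmem
  have hlux_nn : 0 ≤ luxNorm p μ (fracDiff α h f) :=
    Real.sInf_nonneg (fun x hx => hx.1.le)
  rw [Real.norm_eq_abs, abs_of_nonneg hlux_nn]
  rw [hε'] at hlux_le
  linarith
end
end

section
/- Let ψ = {ψ_k}_{k∈ℤ} be a sequence of complex numbers such that |ψ_{−k}| = |ψ_k| ≥ |ψ_{k+1}| > 0 for all k ≥ 0. Then for every trigonometric polynomial τ_n of degree at most n, n ∈ ℕ, one has ‖τ_n^ψ‖_{p,μ} ≤ (1/|ψ_n|) ‖τ_n‖_{p,μ}. In particular, for ψ_k = |k|^{−r} with r > 0 (so that τ_n^ψ = τ_n^{(r)}), ‖τ_n^{(r)}‖_{p,μ} ≤ n^r ‖τ_n‖_{p,μ}. -/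
open MeasureTheory Filter Topology Asymptotics

noncomputable section

lemma integral_exp_int (m : ℤ) :
    (∫ t in (0:ℝ)..(2*Real.pi), Complex.exp (Complex.I * (m:ℂ) * (t:ℂ)))
      = if m = 0 then (2*Real.pi : ℂ) else 0 := by
  rcases eq_or_ne m 0 with h | h
  · simp [h]
  · rw [if_neg h]
    have hc : (Complex.I * (m:ℂ)) ≠ 0 := by
      simp [Complex.I_ne_zero, Complex.ext_iff]
      exact_mod_cast h
    have : (∫ t in (0:ℝ)..(2*Real.pi), Complex.exp ((Complex.I * (m:ℂ)) * (t:ℂ)))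
        = (Complex.exp ((Complex.I * (m:ℂ)) * ((2*Real.pi:ℝ):ℂ))
          - Complex.exp ((Complex.I * (m:ℂ)) * ((0:ℝ):ℂ))) / (Complex.I * (m:ℂ)) :=
      integral_exp_mul_complex hc
    simp only [mul_assoc] at this ⊢
    rw [this]
    have h1 : Complex.exp ((m:ℂ) * (2 * Real.pi * Complex.I)) = 1 :=
      Complex.exp_int_mul_two_pi_mul_I m
    rw [show Complex.I * ((m:ℂ) * ((2*Real.pi:ℝ):ℂ)) = (m:ℂ) * (2 * Real.pi * Complex.I) by
        push_cast; ring, h1]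
    simp

lemma fcoeff_finsum (s : Finset ℤ) (c : ℤ → ℂ) (k : ℤ) :
    fcoeff (fun x => ∑ m ∈ s, c m * Complex.exp (Complex.I * (m:ℂ) * (x:ℂ))) k
      = if k ∈ s then c k else 0 := by
  unfold fcoeff
  have hπ : (2 * (Real.pi : ℂ)) ≠ 0 := by
    simp [Complex.ext_iff, Real.pi_ne_zero]
  have hint : ∀ m ∈ s, IntervalIntegrable
      (fun t : ℝ => c m * Complex.exp (Complex.I * (m:ℂ) * (t:ℂ))
        * Complex.exp (-(Complex.I * (k:ℂ) * (t:ℂ)))) volume 0 (2*Real.pi) := by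
    intro m _
    apply Continuous.intervalIntegrable
    fun_prop
  have h1 : (∫ t in (0:ℝ)..(2*Real.pi),
      (∑ m ∈ s, c m * Complex.exp (Complex.I * (m:ℂ) * (t:ℂ)))
        * Complex.exp (-(Complex.I * (k:ℂ) * (t:ℂ))))
      = ∑ m ∈ s, ∫ t in (0:ℝ)..(2*Real.pi),
          c m * Complex.exp (Complex.I * (m:ℂ) * (t:ℂ))
            * Complex.exp (-(Complex.I * (k:ℂ) * (t:ℂ))) := by
    rw [← intervalIntegral.integral_finset_sum hint]
    congr 1
    ext t
    rw [Finset.sum_mul]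
  rw [h1]
  have h2 : ∀ m ∈ s, (∫ t in (0:ℝ)..(2*Real.pi),
      c m * Complex.exp (Complex.I * (m:ℂ) * (t:ℂ))
        * Complex.exp (-(Complex.I * (k:ℂ) * (t:ℂ))))
      = c m * (if m - k = 0 then (2*Real.pi:ℂ) else 0) := by
    intro m _
    rw [← integral_exp_int (m - k), ← intervalIntegral.integral_const_mul]
    congr 1
    ext t
    rw [mul_assoc, ← Complex.exp_add]
    congr 2
    push_cast
    ring
  rw [Finset.sum_congr rfl h2]
  by_cases hk : k ∈ s
  · rw [if_pos hk]
    rw [Finset.sum_eq_single k]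
    · rw [if_pos (sub_self k), ← mul_assoc, mul_comm _ (c k), mul_assoc]
      rw [one_div, inv_mul_cancel₀ hπ, mul_one]
    · intro m _ hm
      rw [if_neg (sub_ne_zero.2 hm), mul_zero]
    · intro h; exact absurd hk h
  · rw [if_neg hk]
    rw [Finset.sum_eq_zero, mul_zero]
    intro m hm
    rw [if_neg (sub_ne_zero.2 (by rintro rfl; exact hk hm)), mul_zero]

lemma rpow_le_self' {x q : ℝ} (hx : 0 ≤ x) (hx1 : x ≤ 1) (hq : 1 ≤ q) : x ^ q ≤ x := by
  rcases eq_or_lt_of_le hx with h | h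
  · rw [← h, Real.zero_rpow (by linarith : q ≠ 0)]
  · calc x ^ q ≤ x ^ (1:ℝ) := Real.rpow_le_rpow_of_exponent_ge h hx1 hq
    _ = x := Real.rpow_one x

lemma lpSet_nonempty (p μ : ℤ → ℝ) (hp : ∀ k : ℤ, 1 ≤ p k) (hμ : ∀ k : ℤ, 0 ≤ μ k)
    (f : ℝ → ℂ) (s : Finset ℤ) (hs : ∀ k ∉ s, fcoeff f k = 0) :
    (lpSet p μ f).Nonempty := by
  set a : ℝ := 1 + ∑ k ∈ s, (1 + μ k) * ‖fcoeff f k‖ with ha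
  have hterms : ∀ k ∈ s, 0 ≤ (1 + μ k) * ‖fcoeff f k‖ := fun k _ =>
    mul_nonneg (by linarith [hμ k]) (norm_nonneg _)
  have hsum0 : 0 ≤ ∑ k ∈ s, (1 + μ k) * ‖fcoeff f k‖ :=
    Finset.sum_nonneg hterms
  have ha1 : 1 ≤ a := by simp [ha]; linarith
  have ha0 : 0 < a := by linarith
  have hle1 : ∀ k, ‖fcoeff f k‖ / a ≤ 1 := by
    intro k
    rw [div_le_one ha0]
    by_cases hk : k ∈ s
    · calc ‖fcoeff f k‖ ≤ (1 + μ k) * ‖fcoeff f k‖ := by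
            nlinarith [norm_nonneg (fcoeff f k), hμ k]
      _ ≤ ∑ j ∈ s, (1 + μ j) * ‖fcoeff f j‖ :=
            Finset.single_le_sum hterms hk
      _ ≤ a := by linarith
    · rw [hs k hk]; simpa using ha0.le
  have hzero : ∀ k ∉ s, μ k * (‖fcoeff f k‖ / a) ^ (p k) = 0 := by
    intro k hk
    rw [hs k hk]
    simp [Real.zero_rpow (by linarith [hp k] : p k ≠ 0)]
  refine ⟨a, ha0, summable_of_ne_finset_zero hzero, ?_⟩
  rw [tsum_eq_sum hzero]
  have hbound : ∀ k ∈ s, μ k * (‖fcoeff f k‖ / a) ^ (p k)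
      ≤ μ k * (‖fcoeff f k‖ / a) := by
    intro k _
    exact mul_le_mul_of_nonneg_left
      (rpow_le_self' (div_nonneg (norm_nonneg _) ha0.le) (hle1 k) (hp k)) (hμ k)
  calc (∑ k ∈ s, μ k * (‖fcoeff f k‖ / a) ^ (p k))
      ≤ ∑ k ∈ s, μ k * (‖fcoeff f k‖ / a) := Finset.sum_le_sum hbound
    _ = (∑ k ∈ s, μ k * ‖fcoeff f k‖) / a := by
        rw [Finset.sum_div]; exact Finset.sum_congr rfl fun k _ => by ring
    _ ≤ (a - 1) / a := by
        gcongr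
        have h' : a - 1 = ∑ k ∈ s, (1 + μ k) * ‖fcoeff f k‖ := by rw [ha]; ring
        rw [h']
        exact Finset.sum_le_sum fun k _ =>
          mul_le_mul_of_nonneg_right (by linarith) (norm_nonneg _)
    _ ≤ 1 := by rw [div_le_one ha0]; linarith

lemma lux_le (p μ : ℤ → ℝ) (hp : ∀ k : ℤ, 1 ≤ p k) (hμ : ∀ k : ℤ, 0 ≤ μ k)
    (f g : ℝ → ℂ) (C : ℝ) (hC : 0 < C)
    (habs : ∀ k, ‖fcoeff g k‖ ≤ C * ‖fcoeff f k‖)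
    (hne : (lpSet p μ f).Nonempty) :
    luxNorm p μ g ≤ C * luxNorm p μ f := by
  have hmem : ∀ a ∈ lpSet p μ f, C * a ∈ lpSet p μ g := by
    rintro a ⟨ha0, hsum, hle⟩
    have hCa : 0 < C * a := mul_pos hC ha0
    have hterm : ∀ k, μ k * (‖fcoeff g k‖ / (C * a)) ^ (p k)
        ≤ μ k * (‖fcoeff f k‖ / a) ^ (p k) := by
      intro k
      apply mul_le_mul_of_nonneg_left ?_ (hμ k)
      apply Real.rpow_le_rpow (div_nonneg (norm_nonneg _) hCa.le)
        ?_ (by linarith [hp k])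
      rw [div_le_div_iff₀ hCa ha0]
      calc ‖fcoeff g k‖ * a ≤ (C * ‖fcoeff f k‖) * a :=
            mul_le_mul_of_nonneg_right (habs k) ha0.le
        _ = ‖fcoeff f k‖ * (C * a) := by ring
    have hnn : ∀ k, 0 ≤ μ k * (‖fcoeff g k‖ / (C * a)) ^ (p k) := fun k =>
      mul_nonneg (hμ k) (Real.rpow_nonneg (div_nonneg (norm_nonneg _) hCa.le) _)
    have hsumg : Summable (fun k : ℤ => μ k * (‖fcoeff g k‖ / (C * a)) ^ (p k)) :=
      Summable.of_nonneg_of_le hnn hterm hsum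
    exact ⟨hCa, hsumg, le_trans (Summable.tsum_le_tsum hterm hsumg hsum) hle⟩
  have hbdd : BddBelow (lpSet p μ g) := ⟨0, fun x hx => hx.1.le⟩
  have h1 : ∀ a ∈ lpSet p μ f, luxNorm p μ g ≤ C * a := fun a ha =>
    csInf_le hbdd (hmem a ha)
  have h2 : luxNorm p μ g / C ≤ sInf (lpSet p μ f) := by
    apply le_csInf hne
    intro a ha
    rw [div_le_iff₀ hC, mul_comm]
    exact h1 a ha
  rw [div_le_iff₀ hC, mul_comm] at h2
  exact h2

lemma fcoeff_trigPoly (c : ℤ → ℂ) (n : ℕ) (k : ℤ) :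
    fcoeff (trigPoly c n) k = if k ∈ Finset.Icc (-(n:ℤ)) (n:ℤ) then c k else 0 :=
  fcoeff_finsum (Finset.Icc (-(n:ℤ)) (n:ℤ)) c k

lemma fcoeff_trigPolyPsi (ψ c : ℤ → ℂ) (n : ℕ) (k : ℤ) :
    fcoeff (trigPolyPsi ψ c n) k
      = if k ∈ Finset.Icc (-(n:ℤ)) (n:ℤ) then (if k = 0 then 0 else c k / ψ k) else 0 :=
  fcoeff_finsum (Finset.Icc (-(n:ℤ)) (n:ℤ)) (fun k => if k = 0 then 0 else c k / ψ k) k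

lemma main_helper (p μ : ℤ → ℝ) (hp : ∀ k : ℤ, 1 ≤ p k) (hμ : ∀ k : ℤ, 0 ≤ μ k)
    (n : ℕ) (c : ℤ → ℂ) (ψ : ℤ → ℂ) (C : ℝ) (hC : 0 < C)
    (hψC : ∀ k : ℤ, k ∈ Finset.Icc (-(n:ℤ)) (n:ℤ) → k ≠ 0 →
      (‖ψ k‖)⁻¹ ≤ C) :
    luxNorm p μ (trigPolyPsi ψ c n) ≤ C * luxNorm p μ (trigPoly c n) := by
  apply lux_le p μ hp hμ _ _ C hC
  · intro k
    rw [fcoeff_trigPoly, fcoeff_trigPolyPsi]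
    by_cases hk : k ∈ Finset.Icc (-(n:ℤ)) (n:ℤ)
    · rw [if_pos hk, if_pos hk]
      by_cases h0 : k = 0
      · rw [if_pos h0]
        simpa using mul_nonneg hC.le (norm_nonneg _)
      · rw [if_neg h0, norm_div]
        rw [div_eq_mul_inv, mul_comm C]
        exact mul_le_mul_of_nonneg_left (hψC k hk h0) (norm_nonneg _)
    · rw [if_neg hk, if_neg hk]
      simp
  · exact lpSet_nonempty p μ hp hμ _ (Finset.Icc (-(n:ℤ)) (n:ℤ)) fun k hk => by
      rw [fcoeff_trigPoly, if_neg hk]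

/-- if `|ψ_{−k}| = |ψ_k| ≥ |ψ_{k+1}| > 0` for all `k ≥ 0`, then
`‖τ_n^ψ‖_{p,μ} ≤ (1/|ψ_n|) ‖τ_n‖_{p,μ}`; in particular, for `ψ_k = |k|^{−r}` (`r > 0`),
`‖τ_n^{(r)}‖_{p,μ} ≤ n^r ‖τ_n‖_{p,μ}`. -/
theorem stmt_13 (K : ℝ) (p μ : ℤ → ℝ) (hp : ∀ k : ℤ, 1 ≤ p k ∧ p k ≤ K)
    (hμ : ∀ k : ℤ, 0 ≤ μ k) (n : ℕ) (hn : 0 < n) (c : ℤ → ℂ) (ψ : ℤ → ℂ)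
    (hψ : ∀ k : ℕ, ‖ψ (-(k : ℤ))‖ = ‖ψ (k : ℤ)‖ ∧
      ‖ψ ((k : ℤ) + 1)‖ ≤ ‖ψ (k : ℤ)‖ ∧
      0 < ‖ψ ((k : ℤ) + 1)‖) :
    luxNorm p μ (trigPolyPsi ψ c n) ≤
        (1 / ‖ψ (n : ℤ)‖) * luxNorm p μ (trigPoly c n) ∧
      ∀ r : ℝ, 0 < r →
        luxNorm p μ (trigPolyPsi (fun k : ℤ => ((|(k : ℝ)| ^ (-r) : ℝ) : ℂ)) c n) ≤
          (n : ℝ) ^ r * luxNorm p μ (trigPoly c n) := by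
  have hp1 : ∀ k : ℤ, 1 ≤ p k := fun k => (hp k).1
  have hanti : Antitone (fun k : ℕ => ‖ψ (k : ℤ)‖) := by
    apply antitone_nat_of_succ_le
    intro k
    have := (hψ k).2.1
    simpa [Nat.cast_add] using this
  have hpos : 0 < ‖ψ ((n:ℕ) : ℤ)‖ := by
    have := (hψ (n-1)).2.2
    rwa [show ((n-1:ℕ):ℤ) + 1 = ((n:ℕ):ℤ) by omega] at this
  have habs_eq : ∀ k : ℤ, ‖ψ k‖ = ‖ψ (k.natAbs : ℤ)‖ := by
    intro k
    rcases le_or_gt 0 k with h | h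
    · rw [Int.natAbs_of_nonneg h]
    · have : k = -(k.natAbs : ℤ) := by omega
      conv_lhs => rw [this]
      exact (hψ k.natAbs).1
  constructor
  · apply main_helper p μ hp1 hμ n c ψ _ (by positivity)
    intro k hk h0
    rw [Finset.mem_Icc] at hk
    rw [one_div]
    apply inv_anti₀ hpos
    rw [habs_eq k]
    apply hanti
    omega
  · intro r hr
    apply main_helper p μ hp1 hμ n c _ _ (Real.rpow_pos_of_pos (by exact_mod_cast hn) r)
    intro k hk h0
    rw [Finset.mem_Icc] at hk
    have hk1 : (1:ℝ) ≤ |(k:ℝ)| := by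
      rw [← Int.cast_abs]
      exact_mod_cast Int.one_le_abs h0
    have hkn : |(k:ℝ)| ≤ (n:ℝ) := by
      rw [← Int.cast_abs]
      have : |k| ≤ (n:ℤ) := abs_le.2 ⟨hk.1, hk.2⟩
      exact_mod_cast this
    have habs : ‖((|(k:ℝ)| ^ (-r) : ℝ) : ℂ)‖ = |(k:ℝ)| ^ (-r) := by
      rw [Complex.norm_real, Real.norm_eq_abs, abs_of_nonneg (Real.rpow_nonneg (abs_nonneg _) _)]
    rw [habs, Real.rpow_neg (abs_nonneg _), inv_inv]
    exact Real.rpow_le_rpow (by linarith) hkn hr.le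
end
end
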